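/- Let (X, 𝔐, μ) be a positive measure space with μ semifinite (every set of infinite measure contains a set of positive finite measure), let p ∈ [1,∞), and let w : X → 𝕂 be a measurable map. Then φ·w ∈ L^p(μ) for all φ ∈ L^p(μ) if and only if w ∈ L^∞(μ). -/

import Mathlib

open Filter Topology MeasureTheory ENNReal

noncomputable section

def LiYorkePair {M : Type*} [PseudoMetricSpace M] (g : M → M) (x y : M) : Prop :=
  Filter.liminf (fun n : ℕ => edist (g^[n] x) (g^[n] y)) Filter.atTop = 0 ∧
  0 < Filter.limsup (fun n : ℕ => edist (g^[n] x) (g^[n] y)) Filter.atTop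

def LiYorkeChaotic {M : Type*} [PseudoMetricSpace M] (g : M → M) : Prop :=
  ∃ S : Set M, ¬ S.Countable ∧ S.Pairwise (LiYorkePair g)

def DenselyLiYorkeChaotic {M : Type*} [PseudoMetricSpace M] (g : M → M) : Prop :=
  ∃ S : Set M, Dense S ∧ ¬ S.Countable ∧ S.Pairwise (LiYorkePair g)

open scoped NNReal

lemma aux_summable_inv_sq : (∑' j : ℕ, (((j : ℝ≥0∞)+1)^2)⁻¹) ≠ ⊤ := by
  have h : ∀ j : ℕ, (((j : ℝ≥0∞)+1)^2)⁻¹ = (((((j : ℝ≥0)+1)^2)⁻¹ : ℝ≥0) : ℝ≥0∞) := by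
    intro j
    rw [ENNReal.coe_inv (by positivity), ENNReal.coe_pow]
    push_cast
    rfl
  simp_rw [h]
  rw [ENNReal.tsum_coe_ne_top_iff_summable, ← NNReal.summable_coe]
  have : Summable (fun j : ℕ => (((j:ℝ)+1)^2)⁻¹) := by
    have := (summable_nat_add_iff (f := fun n : ℕ => ((n:ℝ)^2)⁻¹) 1).2
      (Real.summable_one_div_nat_pow.2 one_lt_two |>.congr (by intro n; simp [one_div]))
    exact this.congr (by intro n; push_cast; ring_nf)
  exact this.congr (by intro n; push_cast; ring_nf)

lemma aux_tsum_div_top : (∑' j : ℕ, (j : ℝ≥0∞) * (((j : ℝ≥0∞)+1)^2)⁻¹) = ⊤ := by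
  by_contra h
  have hco : ∀ j : ℕ, (j : ℝ≥0∞) * (((j : ℝ≥0∞)+1)^2)⁻¹
      = (((j : ℝ≥0) * (((j : ℝ≥0)+1)^2)⁻¹ : ℝ≥0) : ℝ≥0∞) := by
    intro j
    rw [ENNReal.coe_mul, ENNReal.coe_inv (by positivity), ENNReal.coe_pow]
    push_cast
    rfl
  simp_rw [hco] at h
  have hs : Summable (fun j : ℕ => ((j:ℝ) * (((j:ℝ)+1)^2)⁻¹)) := by
    have := ENNReal.tsum_coe_ne_top_iff_summable.1 h
    rw [← NNReal.summable_coe] at this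
    exact this.congr (by intro n; push_cast; ring_nf)
  have h1 : Summable (fun j : ℕ => (((j:ℝ)+1) * (((j:ℝ)+2)^2)⁻¹)) := by
    have := (summable_nat_add_iff 1).2 hs
    exact this.congr (by intro n; push_cast; ring_nf)
  have h2 : Summable (fun j : ℕ => (2*((j:ℝ)+2))⁻¹) := by
    apply Summable.of_nonneg_of_le (fun j => by positivity) (fun j => ?_) h1
    rw [inv_eq_one_div, ← div_eq_mul_inv, div_le_div_iff₀ (by positivity) (by positivity)]
    nlinarith [sq_nonneg ((j:ℝ)+2)]
  have h3 : Summable (fun j : ℕ => ((j:ℝ)+2)⁻¹) := by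
    have := h2.mul_left 2
    apply this.congr
    intro n
    rw [mul_inv, ← mul_assoc]
    norm_num
  have h4 : Summable (fun n : ℕ => ((n:ℝ))⁻¹) := by
    exact (summable_nat_add_iff (f := fun n : ℕ => ((n:ℝ))⁻¹) 2).1
      (h3.congr (by intro n; push_cast; ring_nf))
  exact Real.not_summable_natCast_inv h4
theorem weight_mul_memLp_iff_memLinfty
    {𝕂 : Type} [RCLike 𝕂] {X : Type} [MeasurableSpace X] (μ : Measure X)
    (hsemi : ∀ A : Set X, MeasurableSet A → μ A = ⊤ →
      ∃ B : Set X, B ⊆ A ∧ MeasurableSet B ∧ 0 < μ B ∧ μ B < ⊤)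
    (p : ℝ≥0∞) (hp1 : 1 ≤ p) (hp2 : p ≠ ⊤)
    (w : X → 𝕂) (hwm : Measurable w) :
    (∀ φ : X → 𝕂, MemLp φ p μ → MemLp (φ * w) p μ) ↔ MemLp w ⊤ μ := by
  constructor
  · intro H
    by_contra hw
    -- the essential sup of ‖w‖ is infinite
    have hsup : ∀ n : ℕ, μ {x | (n : ℝ≥0) < ‖w x‖₊} ≠ 0 := by
      intro n hn0
      apply hw
      refine ⟨hwm.aestronglyMeasurable, ?_⟩
      rw [eLpNorm_exponent_top]
      refine lt_of_le_of_lt (eLpNormEssSup_le_of_ae_nnnorm_bound (C := n) ?_) (by simp)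
      rw [ae_iff]
      simpa only [not_le] using hn0
    -- annuli
    set D : ℕ → Set X := fun m => {x | (m : ℝ≥0) < ‖w x‖₊} ∩ {x | ‖w x‖₊ ≤ (m : ℝ≥0) + 1}
      with hD
    have measD : ∀ m, MeasurableSet (D m) := fun m =>
      (measurableSet_lt measurable_const hwm.nnnorm).inter
        (measurableSet_le hwm.nnnorm measurable_const)
    have key : ∀ n : ℕ, ∃ m, n ≤ m ∧ μ (D m) ≠ 0 := by
      intro n
      by_contra hcon
      push_neg at hcon
      have hsub : {x | (n : ℝ≥0) < ‖w x‖₊} ⊆ ⋃ k : ℕ, D (n + k) := by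
        intro x hx
        have hx' : (n : ℝ≥0) < ‖w x‖₊ := hx
        rcases le_or_gt ‖w x‖₊ ((n : ℝ≥0) + 1) with hle | hlt
        · exact Set.mem_iUnion.2 ⟨0, by simpa using hx', by simpa using hle⟩
        · set r : ℝ≥0 := ‖w x‖₊ with hr
          set m : ℕ := ⌈r⌉₊ with hm
          have hm1 : r ≤ m := Nat.le_ceil r
          have hm2 : (n + 1 : ℕ) < m := by
            have : ((n + 1 : ℕ) : ℝ≥0) < (m : ℝ≥0) := by
              push_cast; exact lt_of_lt_of_le hlt hm1
            exact_mod_cast this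
          refine Set.mem_iUnion.2 ⟨m - 1 - n, ?_, ?_⟩
          · show ((n + (m - 1 - n) : ℕ) : ℝ≥0) < r
            have heq : n + (m - 1 - n) = m - 1 := by omega
            rw [heq]
            by_contra hcon2
            push_neg at hcon2
            have := Nat.ceil_le.2 hcon2
            omega
          · show r ≤ ((n + (m - 1 - n) : ℕ) : ℝ≥0) + 1
            have heq : n + (m - 1 - n) = m - 1 := by omega
            rw [heq]
            have : (((m - 1 : ℕ) : ℝ≥0) + 1) = (m : ℝ≥0) := by
              have : m - 1 + 1 = m := by omega
              rw [← this]; push_cast; ring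
            rw [this]; exact hm1
      exact hsup n (measure_mono_null hsub
        (measure_iUnion_null (fun k => hcon (n + k) (Nat.le_add_right n k))))
    choose K hK1 hK2 using key
    -- strictly increasing sequence of annulus indices with positive measure
    set k : ℕ → ℕ := fun j => Nat.rec (K 0) (fun _ prev => K (prev + 1)) j with hk
    have hk0 : k 0 = K 0 := rfl
    have hksucc : ∀ j, k (j + 1) = K (k j + 1) := fun j => rfl
    have hkmono : StrictMono k :=
      strictMono_nat_of_lt_succ (fun j => by rw [hksucc]; exact Nat.lt_of_succ_le (hK1 _))
    have hkD : ∀ j, μ (D (k j)) ≠ 0 := by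
      intro j
      cases j with
      | zero => rw [hk0]; exact hK2 0
      | succ i => rw [hksucc]; exact hK2 _
    have hkj : ∀ j : ℕ, j ≤ k j := fun j => hkmono.le_apply
    -- finite positive measure subsets
    have hB : ∀ j : ℕ, ∃ B : Set X, B ⊆ D (k j) ∧ MeasurableSet B ∧ 0 < μ B ∧ μ B < ⊤ := by
      intro j
      by_cases h : μ (D (k j)) = ⊤
      · exact hsemi _ (measD _) h
      · exact ⟨D (k j), subset_rfl, measD _, pos_iff_ne_zero.2 (hkD j), lt_top_iff_ne_top.2 h⟩
    choose B hBsub hBmeas hBpos hBfin using hB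
    -- disjointness
    have hBd : ∀ i j x, x ∈ B i → x ∈ B j → i = j := by
      intro i j x hi hj
      have h1 := hBsub i hi
      have h2 := hBsub j hj
      have key2 : ∀ a b : ℕ, x ∈ D a → x ∈ D b → a ≤ b := by
        intro a b ha hb
        have : (a : ℝ≥0) < (b : ℝ≥0) + 1 := lt_of_lt_of_le ha.1 hb.2
        have : (a : ℝ≥0) < ((b + 1 : ℕ) : ℝ≥0) := by push_cast; exact this
        exact Nat.lt_succ_iff.1 (by exact_mod_cast this)
      exact hkmono.injective (le_antisymm (key2 _ _ h1 h2) (key2 _ _ h2 h1))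
    -- exponents
    have hp0 : p ≠ 0 := (lt_of_lt_of_le zero_lt_one hp1).ne'
    set q : ℝ := p.toReal with hqdef
    have hq0 : 0 < q := ENNReal.toReal_pos hp0 hp2
    have hq1 : 1 ≤ q := by
      rw [hqdef, ← ENNReal.toReal_one]
      exact ENNReal.toReal_mono hp2 hp1
    -- coefficients
    set c : ℕ → ℝ≥0∞ := fun j => ((((j : ℝ≥0∞) + 1) ^ 2 * μ (B j))⁻¹) ^ (1 / q) with hc
    have hbase_ne0 : ∀ j : ℕ, ((j : ℝ≥0∞) + 1) ^ 2 * μ (B j) ≠ 0 := fun j =>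
      mul_ne_zero (pow_ne_zero _ (by simp)) (hBpos j).ne'
    have hbase_netop : ∀ j : ℕ, ((j : ℝ≥0∞) + 1) ^ 2 * μ (B j) ≠ ⊤ := fun j =>
      ENNReal.mul_ne_top (ENNReal.pow_ne_top (by simp [ENNReal.add_ne_top])) (hBfin j).ne
    have hcq : ∀ j : ℕ, c j ^ q = (((j : ℝ≥0∞) + 1) ^ 2 * μ (B j))⁻¹ := by
      intro j
      rw [hc, ← ENNReal.rpow_mul, one_div, inv_mul_cancel₀ hq0.ne', ENNReal.rpow_one]
    have hc_ne_top : ∀ j, c j ≠ ⊤ := fun j =>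
      (ENNReal.rpow_lt_top_of_nonneg (by positivity) (ENNReal.inv_ne_top.2 (hbase_ne0 j))).ne
    -- the function g and φ
    set g : X → ℝ≥0∞ := fun x => ∑' j, (B j).indicator (fun _ => c j) x with hg
    have hgx : ∀ j x, x ∈ B j → g x = c j := by
      intro j x hx
      rw [show g x = ∑' i : ℕ, (B i).indicator (fun _ => c i) x from rfl]
      rw [tsum_eq_single j (fun i hij =>
        Set.indicator_of_notMem (fun hxi => hij (hBd i j x hxi hx)) _)]
      exact Set.indicator_of_mem hx _
    have hgx0 : ∀ x, x ∉ (⋃ j, B j) → g x = 0 := by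
      intro x hx
      rw [show g x = ∑' i : ℕ, (B i).indicator (fun _ => c i) x from rfl]
      have : ∀ j, (B j).indicator (fun _ => c j) x = 0 := fun j =>
        Set.indicator_of_notMem (fun h => hx (Set.mem_iUnion.2 ⟨j, h⟩)) _
      rw [tsum_congr this, tsum_zero]
    have hgfin : ∀ x, g x ≠ ⊤ := by
      intro x
      by_cases hx : x ∈ ⋃ j, B j
      · obtain ⟨j, hj⟩ := Set.mem_iUnion.1 hx
        rw [hgx j x hj]; exact hc_ne_top j
      · rw [hgx0 x hx]; simp
    have hgmeas : Measurable g :=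
      Measurable.ennreal_tsum (fun j => measurable_const.indicator (hBmeas j))
    set φ : X → 𝕂 := fun x => ((g x).toReal : 𝕂) with hφ
    have hφn : ∀ x, (‖φ x‖₊ : ℝ≥0∞) = g x := by
      intro x
      rw [← enorm_eq_nnnorm, ← ofReal_norm, hφ]
      simp only [RCLike.norm_ofReal, abs_of_nonneg ENNReal.toReal_nonneg]
      exact ENNReal.ofReal_toReal (hgfin x)
    have hφm : Measurable φ := RCLike.measurable_ofReal.comp hgmeas.ennreal_toReal
    -- pointwise power identity
    have hgq : ∀ x, g x ^ q = ∑' j, (B j).indicator (fun _ => c j ^ q) x := by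
      intro x
      by_cases hx : x ∈ ⋃ j, B j
      · obtain ⟨j, hj⟩ := Set.mem_iUnion.1 hx
        rw [hgx j x hj,
          tsum_eq_single j (fun i hij =>
            Set.indicator_of_notMem (fun hxi => hij (hBd i j x hxi hj)) _),
          Set.indicator_of_mem hj]
      · rw [hgx0 x hx, ENNReal.zero_rpow_of_pos hq0]
        have : ∀ j, (B j).indicator (fun _ => c j ^ q) x = 0 := fun j =>
          Set.indicator_of_notMem (fun h => hx (Set.mem_iUnion.2 ⟨j, h⟩)) _
        rw [tsum_congr this, tsum_zero]
    have hsum1 : ∀ j : ℕ, c j ^ q * μ (B j) = (((j : ℝ≥0∞) + 1) ^ 2)⁻¹ := by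
      intro j
      rw [hcq, ENNReal.mul_inv (Or.inr (hBfin j).ne) (Or.inr (hBpos j).ne'), mul_assoc,
        ENNReal.inv_mul_cancel (hBpos j).ne' (hBfin j).ne, mul_one]
    -- φ ∈ L^p
    have hφint : ∫⁻ x, (‖φ x‖₊ : ℝ≥0∞) ^ q ∂μ = ∑' j : ℕ, (((j : ℝ≥0∞) + 1) ^ 2)⁻¹ := by
      simp_rw [hφn, hgq]
      rw [lintegral_tsum (fun j => (measurable_const.indicator (hBmeas j)).aemeasurable)]
      exact tsum_congr fun j => by rw [lintegral_indicator_const (hBmeas j), hsum1]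
    have hφmem : MemLp φ p μ := by
      refine ⟨hφm.aestronglyMeasurable, ?_⟩
      rw [eLpNorm_eq_lintegral_rpow_enorm_toReal hp0 hp2, ← hqdef]; simp only [enorm_eq_nnnorm]; rw [hφint]
      exact ENNReal.rpow_lt_top_of_nonneg (by positivity) aux_summable_inv_sq
    -- but φ * w ∉ L^p
    have hmul := H φ hφmem
    have hfin : ∫⁻ x, (‖(φ * w) x‖₊ : ℝ≥0∞) ^ q ∂μ ≠ ⊤ := by
      have := hmul.2
      rw [eLpNorm_eq_lintegral_rpow_enorm_toReal hp0 hp2, ← hqdef] at this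
      have := (ENNReal.rpow_lt_top_iff_of_pos (by positivity : (0:ℝ) < 1 / q)).1 this
      exact this.ne
    -- lower bound
    have hlow : ∀ x, (∑' j, (B j).indicator (fun _ => c j ^ q * (k j : ℝ≥0∞) ^ q) x)
        ≤ (‖(φ * w) x‖₊ : ℝ≥0∞) ^ q := by
      intro x
      by_cases hx : x ∈ ⋃ j, B j
      · obtain ⟨j, hj⟩ := Set.mem_iUnion.1 hx
        rw [tsum_eq_single j (fun i hij =>
            Set.indicator_of_notMem (fun hxi => hij (hBd i j x hxi hj)) _),
          Set.indicator_of_mem hj]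
        have hwx : ((k j : ℝ≥0) : ℝ≥0∞) ≤ (‖w x‖₊ : ℝ≥0∞) :=
          ENNReal.coe_le_coe.2 (le_of_lt (hBsub j hj).1)
        have hφx : (‖φ x‖₊ : ℝ≥0∞) = c j := by rw [hφn, hgx j x hj]
        have : (‖(φ * w) x‖₊ : ℝ≥0∞) = (‖φ x‖₊ : ℝ≥0∞) * (‖w x‖₊ : ℝ≥0∞) := by
          simp [Pi.mul_apply, nnnorm_mul, ENNReal.coe_mul]
        rw [this, hφx, ENNReal.mul_rpow_of_nonneg _ _ hq0.le]
        refine mul_le_mul_right ?_ _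
        refine le_trans ?_ (ENNReal.rpow_le_rpow hwx hq0.le)
        norm_cast
      · have : ∀ j, (B j).indicator (fun _ => c j ^ q * (k j : ℝ≥0∞) ^ q) x = 0 := fun j =>
          Set.indicator_of_notMem (fun h => hx (Set.mem_iUnion.2 ⟨j, h⟩)) _
        rw [tsum_congr this, tsum_zero]
        exact zero_le
    have hlow2 : (∑' j, c j ^ q * (k j : ℝ≥0∞) ^ q * μ (B j))
        ≤ ∫⁻ x, (‖(φ * w) x‖₊ : ℝ≥0∞) ^ q ∂μ := by
      calc (∑' j, c j ^ q * (k j : ℝ≥0∞) ^ q * μ (B j))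
          = ∫⁻ x, ∑' j, (B j).indicator (fun _ => c j ^ q * (k j : ℝ≥0∞) ^ q) x ∂μ := by
            rw [lintegral_tsum (fun j => (measurable_const.indicator (hBmeas j)).aemeasurable)]
            exact tsum_congr fun j => (lintegral_indicator_const (hBmeas j) _).symm
        _ ≤ ∫⁻ x, (‖(φ * w) x‖₊ : ℝ≥0∞) ^ q ∂μ := lintegral_mono hlow
    -- the series diverges
    have hdiv : (∑' j, c j ^ q * (k j : ℝ≥0∞) ^ q * μ (B j)) = ⊤ := by
      rw [eq_top_iff, ← aux_tsum_div_top]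
      apply ENNReal.tsum_le_tsum
      intro j
      have h1 : c j ^ q * (k j : ℝ≥0∞) ^ q * μ (B j)
          = (k j : ℝ≥0∞) ^ q * ((((j : ℝ≥0∞) + 1) ^ 2)⁻¹) := by
        rw [mul_right_comm, hsum1, mul_comm]
      rw [h1]
      refine mul_le_mul' ?_ le_rfl
      -- (j : ℝ≥0∞) ≤ (k j)^q
      rcases Nat.eq_zero_or_pos j with hj0 | hjpos
      · simp [hj0]
      · have h2 : (j : ℝ≥0∞) ≤ (k j : ℝ≥0∞) := by exact_mod_cast hkj j
        have h3 : ((k j : ℝ≥0∞)) ^ (1:ℝ) ≤ (k j : ℝ≥0∞) ^ q := by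
          apply ENNReal.rpow_le_rpow_of_exponent_le _ hq1
          have : (1 : ℕ) ≤ k j := le_trans hjpos (hkj j)
          exact_mod_cast this
        rw [ENNReal.rpow_one] at h3
        exact le_trans h2 h3
    exact hfin (top_le_iff.1 (hdiv ▸ hlow2))
  · intro hwinf φ hφ
    have h := MemLp.smul (f := w) (φ := φ) (r := p) hwinf hφ
    have heq : φ • w = φ * w := funext fun x => rfl
    rwa [heq] at h
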